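/- Let C_n be the cycle on n ≥ 4 vertices v_1,...,v_n. If S is a ZIr-set of C_n containing two adjacent vertices, then |S| = 2. Moreover the set of odd-indexed vertices {v_1, v_3, ..., v_{2⌊n/2⌋−1}} is a ZIr-set, and ZIR(C_n) = ⌊n/2⌋. -/

import Mathlib

/-- A fort of a graph: a nonempty set `F` such that every vertex outside `F`
has zero or at least two neighbors in `F`. -/
def IsFort {V : Type*} (G : SimpleGraph V) (F : Set V) : Prop :=
  F.Nonempty ∧ ∀ v ∉ F, ∀ w ∈ F, G.Adj v w → ∃ w' ∈ F, w' ≠ w ∧ G.Adj v w'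

/-- A zero forcing set, characterized as a set intersecting every fort. -/
def IsZFS {V : Type*} (G : SimpleGraph V) (B : Set V) : Prop :=
  ∀ F : Set V, IsFort G F → (B ∩ F).Nonempty

/-- A Z-irredundant set: every element has a private fort. -/
def IsZIr {V : Type*} (G : SimpleGraph V) (S : Set V) : Prop :=
  ∀ x ∈ S, ∃ F : Set V, IsFort G F ∧ S ∩ F = {x}

/-- A maximal Z-irredundant set. -/
def IsMaxZIr {V : Type*} (G : SimpleGraph V) (S : Set V) : Prop :=
  IsZIr G S ∧ ∀ T : Set V, IsZIr G T → S ⊆ T → S = T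

/-- The upper ZIr number: maximum cardinality of a maximal ZIr-set. -/
noncomputable def ZIR {V : Type*} (G : SimpleGraph V) : ℕ :=
  sSup {n | ∃ S : Set V, IsMaxZIr G S ∧ S.ncard = n}

/-- The lower ZIr number: minimum cardinality of a maximal ZIr-set. -/
noncomputable def zir {V : Type*} (G : SimpleGraph V) : ℕ :=
  sInf {n | ∃ S : Set V, IsMaxZIr G S ∧ S.ncard = n}

namespace CycleZIRAux

open SimpleGraph

variable {n : ℕ}

lemma val_one_aux [NeZero n] (hn : 2 ≤ n) : ((1 : Fin n) : ℕ) = 1 := by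
  rw [Fin.val_one']
  exact Nat.mod_eq_of_lt (by omega)

lemma adj_iff [NeZero n] (hn : 2 ≤ n) {u v : Fin n} :
    (cycleGraph n).Adj u v ↔ u = v + 1 ∨ v = u + 1 := by
  rw [SimpleGraph.cycleGraph_adj']
  have key : ∀ a b : Fin n, (a - b).val = 1 ↔ a = b + 1 := by
    intro a b
    rw [show (1 : ℕ) = ((1 : Fin n) : ℕ) from (val_one_aux hn).symm]
    rw [Fin.val_inj, sub_eq_iff_eq_add, add_comm]
  simp only [key]

lemma two_ne_zero_aux [NeZero n] (hn : 3 ≤ n) : ((1 : Fin n) + 1) ≠ 0 := by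
  intro h
  have h1 := val_one_aux (by omega : 2 ≤ n)
  have h2 := congrArg Fin.val h
  rw [Fin.val_add, h1, Fin.val_zero, Nat.mod_eq_of_lt (by omega)] at h2
  omega

open Fin.NatCast in
lemma fort_core [NeZero n] (hn : 4 ≤ n) {F : Set (Fin n)} (hF : IsFort (cycleGraph n) F)
    {u : Fin n} (hu : u ∉ F) (hv : u + 1 ∉ F) : False := by
  classical
  obtain ⟨a, ha⟩ := hF.1
  set v := u + 1 with hv_def
  have hv' : v ∉ F := hv
  have hP : ∃ k : ℕ, (v + (k : Fin n)) ∈ F :=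
    ⟨(a - v).val, by rw [Fin.cast_val_eq_self]; rw [show v + (a - v) = a by abel]; exact ha⟩
  set k := Nat.find hP with hk_def
  have hk : (v + (k : Fin n)) ∈ F := Nat.find_spec hP
  have hmin : ∀ j < k, (v + (j : Fin n)) ∉ F := fun j hj => Nat.find_min hP hj
  have hk1 : 1 ≤ k := by
    by_contra h
    have h0 : k = 0 := by omega
    rw [h0] at hk
    simp only [Nat.cast_zero, add_zero] at hk
    exact hv' hk
  set x := v + ((k - 1 : ℕ) : Fin n) with hx
  have hxF : x ∉ F := hmin _ (by omega)
  have hx1 : x + 1 = v + (k : Fin n) := by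
    rw [hx]
    have hcast : ((k : ℕ) : Fin n) = ((k - 1 : ℕ) : Fin n) + 1 := by
      conv_lhs => rw [show k = (k - 1) + 1 by omega]
      push_cast
      ring
    rw [hcast]
    rw [add_assoc]
  have hadj : (cycleGraph n).Adj x (x + 1) := (adj_iff (by omega)).2 (Or.inr rfl)
  obtain ⟨w', hw'F, hw'ne, hw'adj⟩ := hF.2 x hxF (x + 1) (by rw [hx1]; exact hk) hadj
  rcases (adj_iff (by omega)).1 hw'adj with h | h
  · rcases Nat.lt_or_ge k 2 with h2 | h2
    · have hk1' : k = 1 := by omega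
      have hxv : x = v := by
        rw [hx, hk1']
        simp
      have hwu : w' = u := by
        have heq : w' + 1 = u + 1 := by rw [← h, hxv, hv_def]
        exact add_right_cancel heq
      exact hu (hwu ▸ hw'F)
    · have hw'eq : w' = v + ((k - 2 : ℕ) : Fin n) := by
        have hcast : ((k - 1 : ℕ) : Fin n) = ((k - 2 : ℕ) : Fin n) + 1 := by
          conv_lhs => rw [show k - 1 = (k - 2) + 1 by omega]
          push_cast
          ring
        have heq : w' + 1 = v + ((k - 2 : ℕ) : Fin n) + 1 := by
          rw [← h, hx, hcast]
          exact (add_assoc _ _ _).symm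
        exact add_right_cancel heq
      exact hmin (k - 2) (by omega) (hw'eq ▸ hw'F)
  · exact hw'ne h

lemma fort_compl_not_adj [NeZero n] (hn : 4 ≤ n) {F : Set (Fin n)}
    (hF : IsFort (cycleGraph n) F)
    {a b : Fin n} (ha : a ∉ F) (hb : b ∉ F) : ¬ (cycleGraph n).Adj a b := by
  intro hadj
  rcases (adj_iff (by omega : 2 ≤ n)).1 hadj with h | h
  · exact fort_core hn hF hb (by rw [← h]; exact ha)
  · exact fort_core hn hF ha (by rw [← h]; exact hb)

lemma isFort_of_indep [NeZero n] (hn : 4 ≤ n) {F : Set (Fin n)} (hne : F.Nonempty)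
    (hind : ∀ a b : Fin n, a ∉ F → b ∉ F → ¬ (cycleGraph n).Adj a b) :
    IsFort (cycleGraph n) F := by
  refine ⟨hne, ?_⟩
  intro v hv w hw hadj
  rcases (adj_iff (by omega : 2 ≤ n)).1 hadj with h | h
  · -- v = w + 1; other neighbor is v + 1
    refine ⟨v + 1, ?_, ?_, (adj_iff (by omega : 2 ≤ n)).2 (Or.inr rfl)⟩
    · by_contra hcon
      exact hind v (v + 1) hv hcon ((adj_iff (by omega : 2 ≤ n)).2 (Or.inr rfl))
    · intro hcon
      rw [← hcon] at h
      have h2 : (1 : Fin n) + 1 = 0 := by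
        rw [add_assoc] at h
        exact (left_eq_add.1 h)
      exact two_ne_zero_aux (by omega) h2
  · -- w = v + 1; other neighbor is v - 1
    refine ⟨v - 1, ?_, ?_, ?_⟩
    · by_contra hcon
      have hadj' : (cycleGraph n).Adj v (v - 1) := by
        rw [adj_iff (by omega : 2 ≤ n)]
        left
        rw [sub_add_cancel]
      exact hind v (v - 1) hv hcon hadj'
    · intro hcon
      rw [h] at hcon
      have h2 : (1 : Fin n) + 1 = 0 := by
        have heq : v = v + 1 + 1 := by
          conv_lhs => rw [← sub_add_cancel v 1, hcon]
        rw [add_assoc] at heq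
        exact (left_eq_add.1 heq)
      exact two_ne_zero_aux (by omega) h2
    · rw [adj_iff (by omega : 2 ≤ n)]
      left
      rw [sub_add_cancel]

lemma indep_card_le [NeZero n] (hn : 2 ≤ n) (S : Finset (Fin n))
    (h : ∀ a ∈ S, a + 1 ∉ S) : S.card ≤ n / 2 := by
  classical
  have hinj : Function.Injective (fun a : Fin n => a + 1) := fun a b hab =>
    add_right_cancel hab
  have hcard : (S.image (· + 1)).card = S.card := Finset.card_image_of_injective S hinj
  have hdisj : Disjoint S (S.image (· + 1)) := by
    rw [Finset.disjoint_left]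
    intro y hyS hyT
    obtain ⟨a, haS, hay⟩ := Finset.mem_image.1 hyT
    exact h a haS (by rwa [← hay] at hyS)
  have hunion := Finset.card_union_of_disjoint hdisj
  have hle : (S ∪ S.image (· + 1)).card ≤ n := by
    have := Finset.card_le_univ (S ∪ S.image (· + 1))
    simpa using this
  omega

lemma zir_adj_card (hn : 4 ≤ n) {S : Set (Fin n)} (hS : IsZIr (SimpleGraph.cycleGraph n) S)
    (h : ∃ u ∈ S, ∃ v ∈ S, (SimpleGraph.cycleGraph n).Adj u v) : S.ncard = 2 := by
  haveI : NeZero n := ⟨by omega⟩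
  obtain ⟨u, hu, v, hv, huv⟩ := h
  have hne : u ≠ v := huv.ne
  have hSuv : S = {u, v} := by
    apply Set.Subset.antisymm
    · intro z hz
      by_contra hzuv
      simp only [Set.mem_insert_iff, Set.mem_singleton_iff, not_or] at hzuv
      obtain ⟨F, hF, hSF⟩ := hS z hz
      have huF : u ∉ F := by
        intro hmem
        have hmem2 : u ∈ S ∩ F := ⟨hu, hmem⟩
        rw [hSF] at hmem2
        exact hzuv.1 hmem2.symm
      have hvF : v ∉ F := by
        intro hmem
        have hmem2 : v ∈ S ∩ F := ⟨hv, hmem⟩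
        rw [hSF] at hmem2
        exact hzuv.2 hmem2.symm
      exact fort_compl_not_adj hn hF huF hvF huv
    · intro z hz
      rcases hz with rfl | hz
      · exact hu
      · rw [Set.mem_singleton_iff] at hz
        exact hz ▸ hv
  rw [hSuv, Set.ncard_pair hne]

lemma zir_ncard_le (hn : 4 ≤ n) {S : Set (Fin n)} (hS : IsZIr (SimpleGraph.cycleGraph n) S) :
    S.ncard ≤ n / 2 := by
  haveI : NeZero n := ⟨by omega⟩
  classical
  by_cases hadj : ∃ u ∈ S, ∃ v ∈ S, (cycleGraph n).Adj u v
  · rw [zir_adj_card hn hS hadj]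
    omega
  · push_neg at hadj
    have hfin : S.Finite := Set.toFinite S
    rw [Set.ncard_eq_toFinset_card S hfin]
    apply indep_card_le (by omega : 2 ≤ n)
    intro a haS hbS
    rw [Set.Finite.mem_toFinset] at haS hbS
    exact hadj a haS (a + 1) hbS ((adj_iff (by omega : 2 ≤ n)).2 (Or.inr rfl))

lemma S0_not_adj [NeZero n] (hn : 4 ≤ n) {a b : Fin n} (ha : a.val % 2 = 0 ∧ a.val + 1 < n)
    (hb : b.val % 2 = 0 ∧ b.val + 1 < n) : ¬ (cycleGraph n).Adj a b := by
  intro hadj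
  have h1 := val_one_aux (by omega : 2 ≤ n)
  rcases (adj_iff (by omega : 2 ≤ n)).1 hadj with h | h
  · have : a.val = b.val + 1 := by
      rw [h, Fin.val_add, h1, Nat.mod_eq_of_lt (by omega)]
    omega
  · have : b.val = a.val + 1 := by
      rw [h, Fin.val_add, h1, Nat.mod_eq_of_lt (by omega)]
    omega

lemma S0_zir (hn : 4 ≤ n) :
    IsZIr (SimpleGraph.cycleGraph n) {v : Fin n | v.val % 2 = 0 ∧ v.val + 1 < n} := by
  haveI : NeZero n := ⟨by omega⟩
  intro x hx
  set S := {v : Fin n | v.val % 2 = 0 ∧ v.val + 1 < n} with hS_def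
  refine ⟨(S \ {x})ᶜ, ?_, ?_⟩
  · apply isFort_of_indep hn
    · exact ⟨x, by simp⟩
    · intro a b haF hbF
      rw [Set.notMem_compl_iff] at haF hbF
      exact S0_not_adj hn haF.1 hbF.1
  · ext y
    simp only [Set.mem_inter_iff, Set.mem_compl_iff, Set.mem_diff, Set.mem_singleton_iff,
      not_and, not_not]
    constructor
    · rintro ⟨hyS, hy⟩
      exact hy hyS
    · rintro rfl
      exact ⟨hx, fun _ => rfl⟩

lemma S0_ncard (hn : 4 ≤ n) :
    ({v : Fin n | v.val % 2 = 0 ∧ v.val + 1 < n}).ncard = n / 2 := by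
  have hf : ∀ k : Fin (n / 2), 2 * k.val < n := fun k => by
    have := k.isLt
    omega
  have hinj : Function.Injective (fun k : Fin (n / 2) => (⟨2 * k.val, hf k⟩ : Fin n)) := by
    intro a b h
    have h2 : 2 * a.val = 2 * b.val := congrArg Fin.val h
    exact Fin.val_inj.mp (by omega)
  have hrange : {v : Fin n | v.val % 2 = 0 ∧ v.val + 1 < n} =
      Set.range (fun k : Fin (n / 2) => (⟨2 * k.val, hf k⟩ : Fin n)) := by
    ext v
    simp only [Set.mem_setOf_eq, Set.mem_range]
    constructor
    · rintro ⟨h1, h2⟩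
      have hv := v.isLt
      refine ⟨⟨v.val / 2, by omega⟩, ?_⟩
      exact Fin.val_inj.mp (show 2 * ((v : ℕ) / 2) = (v : ℕ) by omega)
    · rintro ⟨k, rfl⟩
      have hk := k.isLt
      refine ⟨?_, ?_⟩
      · show 2 * (k : ℕ) % 2 = 0
        omega
      · show 2 * (k : ℕ) + 1 < n
        omega
  rw [hrange, ← Nat.card_coe_set_eq, Nat.card_range_of_injective hinj,
    Nat.card_eq_fintype_card, Fintype.card_fin]

end CycleZIRAux

open CycleZIRAux in
theorem cycle_zir_adjacent_and_ZIR {n : ℕ} (hn : 4 ≤ n) :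
    (∀ S : Set (Fin n), IsZIr (SimpleGraph.cycleGraph n) S →
        (∃ u ∈ S, ∃ v ∈ S, (SimpleGraph.cycleGraph n).Adj u v) →
        S.ncard = 2) ∧
      IsZIr (SimpleGraph.cycleGraph n)
        {v : Fin n | v.val % 2 = 0 ∧ v.val + 1 < n} ∧
      ZIR (SimpleGraph.cycleGraph n) = n / 2 := by
  classical
  refine ⟨fun S hS h => zir_adj_card hn hS h, S0_zir hn, ?_⟩
  set S0 := {v : Fin n | v.val % 2 = 0 ∧ v.val + 1 < n} with hS0_def
  have hmax : IsMaxZIr (SimpleGraph.cycleGraph n) S0 := by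
    refine ⟨S0_zir hn, fun T hT hsub => ?_⟩
    by_contra hne
    have hlt : S0.ncard < T.ncard :=
      Set.ncard_lt_ncard (hsub.ssubset_of_ne hne) (Set.toFinite T)
    have hle := zir_ncard_le hn hT
    rw [S0_ncard hn] at hlt
    omega
  have hmem : (n / 2) ∈ {k | ∃ S : Set (Fin n),
      IsMaxZIr (SimpleGraph.cycleGraph n) S ∧ S.ncard = k} :=
    ⟨S0, hmax, S0_ncard hn⟩
  have hub : ∀ k ∈ {k | ∃ S : Set (Fin n),
      IsMaxZIr (SimpleGraph.cycleGraph n) S ∧ S.ncard = k}, k ≤ n / 2 := by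
    rintro k ⟨S, hSmax, rfl⟩
    exact zir_ncard_le hn hSmax.1
  exact le_antisymm (csSup_le ⟨_, hmem⟩ hub) (le_csSup ⟨n / 2, hub⟩ hmem)
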